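/- arXiv:2502.04620 — 2 statements merged into one kernel-verified Lean document; each statement's English description precedes it below -/
import Mathlib

section
/- Lemma 2 (rung strings lie in the Hamiltonian algebra): there exist choice functions a, b : Fin N → Fin 2 such that, with letters P^u_i, \bar P^u_i, P^d_i, \bar P^d_i as above, for every i with 1 ≤ i ≤ N−1 the matrices Complex.I • P(→X_{u(0)}(P^u_i)_{u(i)}), Complex.I • P(→Y_{u(0)}(\bar P^u_i)_{u(i)}), and their spin-down analogues lie in g(S₁), and in addition, for every i with 1 ≤ i ≤ N−2, the following four matrices lie in g(S₁): Complex.I • (P(Z_{d(0)}Z_{d(i)}) * P(→(P^u_i)_{u(i)}(\bar P^u_{i+1})_{u(i+1)})), Complex.I • (P(Z_{d(0)}Z_{d(i)}) * P(→(\bar P^u_i)_{u(i)}(P^u_{i+1})_{u(i+1)})), Complex.I • (P(Z_{u(0)}Z_{u(i)}) * P(→(P^d_i)_{d(i)}(\bar P^d_{i+1})_{d(i+1)})), and Complex.I • (P(Z_{u(0)}Z_{u(i)}) * P(→(\bar P^d_i)_{d(i)}(P^d_{i+1})_{d(i+1)})). (Each indicated product of Pauli-string matrices is itself a Pauli-string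 matrix, since the factors overlap only in Z or identity letters.) -/
open Matrix

attribute [local instance 100] LieRing.ofAssociativeRing

/-- The four 2×2 Pauli matrices: identity, X, Y, Z. -/
noncomputable def pauli : Fin 4 → Matrix (Fin 2) (Fin 2) ℂ
  | 0 => 1
  | 1 => !![0, 1; 1, 0]
  | 2 => !![0, -Complex.I; Complex.I, 0]
  | 3 => !![1, 0; 0, -1]

/-- The matrix of an `n`-qubit Pauli string `p : Fin n → Fin 4`,
the Kronecker product of the `pauli (p i)`. -/
noncomputable def PauliMat {n : ℕ} (p : Fin n → Fin 4) :
    Matrix (Fin n → Fin 2) (Fin n → Fin 2) ℂ :=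
  Matrix.of fun x y => ∏ i, pauli (p i) (x i) (y i)

/-- The Hamiltonian algebra of a set of Pauli strings: the Lie ℝ-subalgebra of the
complex matrices generated by `{I • P(p) : p ∈ S}`. -/
noncomputable def hamAlg {n : ℕ} (S : Set (Fin n → Fin 4)) :
    LieSubalgebra ℝ (Matrix (Fin n → Fin 2) (Fin n → Fin 2) ℂ) :=
  LieSubalgebra.lieSpan ℝ _ ((fun p => Complex.I • PauliMat p) '' S)

/-- The Pauli string `→A_iB_j`: letter `A` at `i`, letter `B` at `j`, `Z` strictly
between `i` and `j`, identity elsewhere. -/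
def ladderString {n : ℕ} (i j : Fin n) (A B : Fin 4) : Fin n → Fin 4 :=
  fun k => if k = i then A else if k = j then B
    else if min i j < k ∧ k < max i j then 3 else 0

/-- The Pauli string `Z_kZ_l`. -/
def zzString {n : ℕ} (k l : Fin n) : Fin n → Fin 4 :=
  fun m => if m = k ∨ m = l then 3 else 0

/-- The Pauli string `Z_k`. -/
def zString {n : ℕ} (k : Fin n) : Fin n → Fin 4 :=
  fun m => if m = k then 3 else 0

/-- A choice of letter: `X` if `c = 0`, `Y` if `c = 1`. -/
def ltr (c : Fin 2) : Fin 4 := if c = 0 then 1 else 2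

/-- The opposite letter: `Y` if `c = 0`, `X` if `c = 1`. -/
def ltrBar (c : Fin 2) : Fin 4 := if c = 0 then 2 else 1

/-- Pauli strings of the Jordan–Wigner transformed hopping terms of one spin species,
with sites embedded via `v : Fin N → Fin (2N)` and hoppings on the edges of `G`. -/
def Sspin {N : ℕ} (G : SimpleGraph (Fin N)) (v : Fin N → Fin (2 * N)) :
    Set (Fin (2 * N) → Fin 4) :=
  {p | ∃ k l : Fin N, G.Adj k l ∧
    (p = ladderString (v k) (v l) 1 1 ∨ p = ladderString (v k) (v l) 2 2)}

/-- Pauli strings of the Jordan–Wigner transformed free fermion model. -/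
def Sfree {N : ℕ} (G : SimpleGraph (Fin N)) (u d : Fin N → Fin (2 * N)) :
    Set (Fin (2 * N) → Fin 4) :=
  Sspin G u ∪ Sspin G d

/-- Pauli strings of the model with a single on-site Coulomb interaction at fermion
site `i0` (interaction term `Z_{u i0} Z_{d i0}`). -/
def Sint {N : ℕ} (G : SimpleGraph (Fin N)) (u d : Fin N → Fin (2 * N)) (i0 : Fin N) :
    Set (Fin (2 * N) → Fin 4) :=
  Sfree G u d ∪ {zzString (u i0) (d i0)}

namespace Rung

def pmul : Fin 4 → Fin 4 → Fin 4 := fun a b =>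
  ![![0,1,2,3], ![1,0,3,2], ![2,3,0,1], ![3,2,1,0]] a b

def phv : Fin 4 → Fin 4 → ℕ := fun a b =>
  ![![0,0,0,0], ![0,0,1,3], ![0,3,0,1], ![0,1,3,0]] a b

lemma pauli_mul (a b : Fin 4) :
    pauli a * pauli b = (Complex.I ^ phv a b) • pauli (pmul a b) := by
  fin_cases a <;> fin_cases b <;>
    · ext i j
      fin_cases i <;> fin_cases j <;>
        simp [pauli, pmul, phv, Matrix.mul_apply, Fin.sum_univ_two, pow_succ, Matrix.vecHead, Matrix.vecTail,
          Complex.I_sq] <;> ring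

lemma PauliMat_mul {n : ℕ} (s t : Fin n → Fin 4) :
    PauliMat s * PauliMat t =
      (∏ i, (Complex.I ^ phv (s i) (t i))) • PauliMat (fun i => pmul (s i) (t i)) := by
  ext x y
  have h1 : (PauliMat s * PauliMat t) x y
      = ∑ z : Fin n → Fin 2, ∏ i, (pauli (s i) (x i) (z i) * pauli (t i) (z i) (y i)) := by
    simp [Matrix.mul_apply, PauliMat, Finset.prod_mul_distrib]
  rw [h1]
  have h2 : ∀ i : Fin n, (pauli (s i) * pauli (t i)) (x i) (y i)
      = ∑ w : Fin 2, pauli (s i) (x i) w * pauli (t i) w (y i) := by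
    intro i; simp [Matrix.mul_apply]
  have h3 : ∑ z : Fin n → Fin 2, ∏ i, (pauli (s i) (x i) (z i) * pauli (t i) (z i) (y i))
      = ∏ i, ∑ w : Fin 2, pauli (s i) (x i) w * pauli (t i) w (y i) := by
    rw [Finset.prod_univ_sum]
    rw [← Fintype.piFinset_univ]
  rw [h3]
  simp only [← h2]
  simp only [pauli_mul, Matrix.smul_apply, smul_eq_mul]
  rw [Finset.prod_mul_distrib]
  simp [PauliMat]

lemma PauliMat_zero {n : ℕ} : PauliMat (fun _ : Fin n => (0 : Fin 4)) = 1 := by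
  ext x y
  simp only [PauliMat, Matrix.of_apply, pauli, Matrix.one_apply]
  rw [Finset.prod_boole]
  simp [funext_iff, Matrix.one_apply, eq_comm]

/-- Jordan–Wigner Majorana string: `Z`'s below `j`, letter `X`/`Y` at `j`. -/
def maj {n : ℕ} (j : Fin n) (c : Fin 2) : Fin n → Fin 4 :=
  fun k => if k < j then 3 else if k = j then ltr c else 0

abbrev Lab (n : ℕ) := Fin n × Fin 2

noncomputable def MJ {n : ℕ} (a : Lab n) :
    Matrix (Fin n → Fin 2) (Fin n → Fin 2) ℂ :=
  PauliMat (maj a.1 a.2)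

lemma prod_phase_neg {n : ℕ} (s t : Fin n → Fin 4) (j : Fin n)
    (h : ∀ k, k ≠ j → phv (s k) (t k) = phv (t k) (s k))
    (hj : (Complex.I ^ phv (s j) (t j)) = -(Complex.I ^ phv (t j) (s j))) :
    (∏ i, (Complex.I ^ phv (s i) (t i))) = -(∏ i, (Complex.I ^ phv (t i) (s i))) := by
  rw [← Finset.prod_erase_mul _ _ (Finset.mem_univ j),
    ← Finset.prod_erase_mul _ _ (Finset.mem_univ j), hj]
  rw [Finset.prod_congr rfl (fun k hk => by rw [h k (Finset.ne_of_mem_erase hk)])]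
  ring

lemma MJ_sq {n : ℕ} (a : Lab n) : MJ a * MJ a = 1 := by
  rw [MJ, PauliMat_mul]
  have h1 : ∀ x : Fin 4, phv x x = 0 := by decide
  have h2 : ∀ x : Fin 4, pmul x x = 0 := by decide
  simp [h1, h2, PauliMat_zero]

lemma MJ_anti' {n : ℕ} (j j' : Fin n) (c c' : Fin 2) (h : (j, c) ≠ (j', c'))
    (hle : j ≤ j') :
    MJ (j, c) * MJ (j', c') = -(MJ (j', c') * MJ (j, c)) := by
  rw [MJ, MJ, PauliMat_mul, PauliMat_mul]
  have hsym : ∀ x y : Fin 4, pmul x y = pmul y x := by decide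
  have hstr : (fun i => pmul (maj j c i) (maj j' c' i))
      = (fun i => pmul (maj j' c' i) (maj j c i)) := by
    funext i; rw [hsym]
  rw [hstr, ← neg_smul]
  congr 1
  apply prod_phase_neg _ _ j
  · intro k hk
    have hcomm : ∀ x y : Fin 4, (x = 0 ∨ y = 0 ∨ x = y) → phv x y = phv y x := by decide
    apply hcomm
    by_cases hkj : k < j
    · right; right
      have : k < j' := lt_of_lt_of_le hkj hle
      simp [maj, hkj, this]
    · left
      simp [maj, hkj, hk]
  · rcases eq_or_lt_of_le hle with rfl | hlt
    · have hcc : c ≠ c' := by simpa using h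
      have : maj j c j = ltr c ∧ maj j c' j = ltr c' := by
        constructor <;> simp [maj]
      rw [this.1, this.2]
      fin_cases c <;> fin_cases c' <;> simp_all [ltr, phv, pow_succ, Complex.I_sq,
        Matrix.vecHead, Matrix.vecTail] <;> ring
    · have h1 : maj j c j = ltr c := by simp [maj]
      have h2 : maj j' c' j = 3 := by simp [maj, hlt]
      rw [h1, h2]
      fin_cases c <;> simp [ltr, phv, pow_succ, Complex.I_sq,
        Matrix.vecHead, Matrix.vecTail] <;> ring

lemma MJ_anti {n : ℕ} (a b : Lab n) (h : a ≠ b) :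
    MJ a * MJ b = -(MJ b * MJ a) := by
  obtain ⟨j, c⟩ := a; obtain ⟨j', c'⟩ := b
  rcases le_total j j' with hle | hle
  · exact MJ_anti' j j' c c' h hle
  · rw [MJ_anti' j' j c' c (Ne.symm h) hle, neg_neg]

noncomputable def W {n : ℕ} (L : List (Lab n)) :
    Matrix (Fin n → Fin 2) (Fin n → Fin 2) ℂ :=
  (L.map MJ).prod

lemma W_nil {n : ℕ} : W ([] : List (Lab n)) = 1 := rfl

lemma W_cons {n : ℕ} (x : Lab n) (L : List (Lab n)) : W (x :: L) = MJ x * W L := by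
  simp [W]

lemma W_append {n : ℕ} (L₁ L₂ : List (Lab n)) : W (L₁ ++ L₂) = W L₁ * W L₂ := by
  simp [W]

lemma MJ_comm_W {n : ℕ} (a : Lab n) (L : List (Lab n)) (h : a ∉ L) :
    MJ a * W L = ((-1 : ℂ) ^ L.length) • (W L * MJ a) := by
  induction L with
  | nil => simp [W_nil]
  | cons x L ih =>
    have hax : a ≠ x := fun hh => h (hh ▸ (List.mem_cons_self : x ∈ x :: L))
    have haL : a ∉ L := fun hh => h (List.mem_cons_of_mem x hh)
    rw [W_cons, ← mul_assoc, MJ_anti a x hax, neg_mul, mul_assoc, ih haL,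
      mul_smul_comm, List.length_cons, pow_succ]
    simp [mul_assoc]

lemma W_comm_disjoint {n : ℕ} (L₁ L₂ : List (Lab n)) (h : ∀ x ∈ L₁, x ∉ L₂) :
    W L₁ * W L₂ = ((-1 : ℂ) ^ (L₁.length * L₂.length)) • (W L₂ * W L₁) := by
  induction L₁ with
  | nil => simp [W_nil]
  | cons x L₁ ih =>
    have hx : x ∉ L₂ := h x (List.mem_cons_self : x ∈ x :: L₁)
    have h' : ∀ y ∈ L₁, y ∉ L₂ := fun y hy => h y (List.mem_cons_of_mem x hy)
    rw [W_cons, mul_assoc, ih h', mul_smul_comm, ← mul_assoc, MJ_comm_W x L₂ hx,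
      smul_mul_assoc, smul_smul, mul_assoc, ← W_cons, ← pow_add]
    congr 2
    simp [List.length_cons]
    ring

lemma W_bracket {n : ℕ} (X Y : List (Lab n)) (s : Lab n)
    (hX : s ∉ X) (hY : s ∉ Y) (hd : ∀ x ∈ X, x ∉ Y)
    (hp : Odd (X.length * Y.length + X.length + Y.length)) :
    ⁅W (X ++ [s]), W (s :: Y)⁆ = (2 : ℂ) • W (X ++ Y) := by
  rw [Ring.lie_def]
  have hxy : W (X ++ [s]) * W (s :: Y) = W (X ++ Y) := by
    rw [W_append X [s], W_cons, W_nil, mul_one, W_cons, W_append]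
    rw [mul_assoc, ← mul_assoc (MJ s), MJ_sq, one_mul]
  have hyx : W (s :: Y) * W (X ++ [s]) = -W (X ++ Y) := by
    have e1 := W_comm_disjoint Y X (fun y hy hx => hd _ hx hy)
    have e2 := MJ_comm_W s X hX
    have e3 := MJ_comm_W s Y hY
    rw [W_cons, W_append X [s], W_cons, W_nil, mul_one]
    rw [W_append, mul_assoc, ← mul_assoc (W Y) (W X), e1, smul_mul_assoc,
      mul_smul_comm, mul_assoc (W X), ← mul_assoc (MJ s) (W X), e2, smul_mul_assoc,
      smul_smul, mul_assoc (W X), ← mul_assoc (MJ s) (W Y), e3, smul_mul_assoc,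
      mul_smul_comm, smul_smul, mul_assoc (W Y), MJ_sq, mul_one, ← pow_add, ← pow_add]
    have hodd : Odd (Y.length * X.length + X.length + Y.length) := by
      rwa [mul_comm] at hp
    rw [Odd.neg_one_pow hodd, neg_one_smul]
  rw [hxy, hyx, sub_neg_eq_add, two_smul]

lemma W_swap {n : ℕ} (x y : Lab n) (h : x ≠ y) (S : List (Lab n)) :
    W (x :: y :: S) = -W (y :: x :: S) := by
  rw [W_cons, W_cons, W_cons, W_cons, ← mul_assoc, ← mul_assoc, MJ_anti x y h, neg_mul]

lemma W_perm {n : ℕ} : ∀ {L L' : List (Lab n)}, L.Perm L' → L.Nodup →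
    W L = W L' ∨ W L = -W L' := by
  intro L L' hp
  induction hp with
  | nil => intro _; left; rfl
  | cons x hp ih =>
    intro hnd
    rcases ih (List.Nodup.of_cons hnd) with h | h
    · left; rw [W_cons, W_cons, h]
    · right; rw [W_cons, W_cons, h, mul_neg]
  | swap x y L =>
    intro hnd
    right
    exact W_swap y x (by simp at hnd; tauto) L
  | trans h1 h2 ih1 ih2 =>
    intro hnd
    rcases ih1 hnd with ha | ha <;> rcases ih2 (h1.nodup hnd) with hb | hb
    · left; rw [ha, hb]
    · right; rw [ha, hb]
    · right; rw [ha, hb]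
    · left; rw [ha, hb, neg_neg]

lemma maj_lt {n : ℕ} {j k : Fin n} (c : Fin 2) (h : k < j) : maj j c k = 3 := by
  simp [maj, h]

lemma maj_self {n : ℕ} (j : Fin n) (c : Fin 2) : maj j c j = ltr c := by
  simp [maj]

lemma maj_gt {n : ℕ} {j k : Fin n} (c : Fin 2) (h : j < k) : maj j c k = 0 := by
  simp [maj, asymm h, h.ne']

lemma MJ_pair_same {n : ℕ} (j : Fin n) (c : Fin 2) :
    MJ (j, c) * MJ (j, c + 1) =
      ((-1 : ℂ) ^ (c : ℕ) * Complex.I) • PauliMat (zString j) := by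
  rw [MJ, MJ, PauliMat_mul]
  have hstr : (fun i => pmul (maj j c i) (maj j (c + 1) i)) = zString j := by
    funext k
    rcases lt_trichotomy k j with hk | rfl | hk
    · rw [maj_lt _ hk, maj_lt _ hk]
      simp only [zString, if_neg (ne_of_lt hk)]
      decide
    · rw [maj_self, maj_self]
      simp only [zString, if_pos rfl]
      fin_cases c <;> decide
    · rw [maj_gt _ hk, maj_gt _ hk]
      simp only [zString, if_neg (ne_of_gt hk)]
      decide
  have hph : (∏ i, (Complex.I ^ phv (maj j c i) (maj j (c + 1) i)))
      = Complex.I ^ phv (ltr c) (ltr (c + 1)) := by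
    rw [Finset.prod_eq_single j]
    · rw [maj_self, maj_self]
    · intro k _ hk
      rcases lt_trichotomy k j with h | rfl | h
      · rw [maj_lt _ h, maj_lt _ h]; rfl
      · exact absurd rfl hk
      · rw [maj_gt _ h, maj_gt _ h]; rfl
    · intro h; exact absurd (Finset.mem_univ j) h
  rw [hstr, hph]
  congr 1
  fin_cases c <;> simp [ltr, phv, Matrix.vecHead, Matrix.vecTail, pow_succ,
    Complex.I_sq] <;> ring

lemma ladder_expr {n : ℕ} (j l : Fin n) (hjl : j < l) (x y : Fin 2) :
    W [(j, x + 1), (l, y)] =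
      ((-1 : ℂ) ^ (x : ℕ) * Complex.I) • PauliMat (ladderString j l (ltr x) (ltr y)) := by
  have hW : W [(j, x + 1), (l, y)] = MJ (j, x + 1) * MJ (l, y) := by
    rw [W_cons, W_cons, W_nil, mul_one]
  rw [hW, MJ, MJ, PauliMat_mul]
  have hstr : (fun i => pmul (maj j (x + 1) i) (maj l y i))
      = ladderString j l (ltr x) (ltr y) := by
    funext k
    have hmin : min j l = j := min_eq_left hjl.le
    have hmax : max j l = l := max_eq_right hjl.le
    by_cases h1 : k = j
    · have e1 : maj j (x + 1) k = ltr (x + 1) := by simp [maj, h1]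
      have e2 : maj l y k = 3 := maj_lt _ (by rw [h1]; exact hjl)
      have e3 : ladderString j l (ltr x) (ltr y) k = ltr x := by
        simp [ladderString, h1]
      rw [e1, e2, e3]
      fin_cases x <;> decide
    · by_cases h2 : k = l
      · have e1 : maj j (x + 1) k = 0 := maj_gt _ (by rw [h2]; exact hjl)
        have e2 : maj l y k = ltr y := by simp [maj, h2]
        have e3 : ladderString j l (ltr x) (ltr y) k = ltr y := by
          simp [ladderString, h1, h2, hjl.ne']
        rw [e1, e2, e3]
        fin_cases y <;> decide
      · rcases lt_trichotomy k j with hk | hk | hk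
        · have e1 : maj j (x + 1) k = 3 := maj_lt _ hk
          have e2 : maj l y k = 3 := maj_lt _ (hk.trans hjl)
          have e3 : ladderString j l (ltr x) (ltr y) k = 0 := by
            simp [ladderString, h1, h2, hmin, hmax, lt_asymm hk]
          rw [e1, e2, e3]; decide
        · exact absurd hk h1
        · rcases lt_trichotomy k l with hk2 | hk2 | hk2
          · have e1 : maj j (x + 1) k = 0 := maj_gt _ hk
            have e2 : maj l y k = 3 := maj_lt _ hk2
            have e3 : ladderString j l (ltr x) (ltr y) k = 3 := by
              simp [ladderString, h1, h2, hmin, hmax, hk, hk2]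
            rw [e1, e2, e3]; decide
          · exact absurd hk2 h2
          · have e1 : maj j (x + 1) k = 0 := maj_gt _ hk
            have e2 : maj l y k = 0 := maj_gt _ hk2
            have e3 : ladderString j l (ltr x) (ltr y) k = 0 := by
              simp [ladderString, h1, h2, hmin, hmax, lt_asymm hk2]
            rw [e1, e2, e3]; decide
  have hph : (∏ i, (Complex.I ^ phv (maj j (x + 1) i) (maj l y i)))
      = Complex.I ^ phv (ltr (x + 1)) 3 := by
    rw [Finset.prod_eq_single j]
    · rw [maj_self, maj_lt _ hjl]
    · intro k _ hk
      rcases lt_trichotomy k j with h | rfl | h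
      · rw [maj_lt _ h, maj_lt _ (h.trans hjl)]; rfl
      · exact absurd rfl hk
      · rcases lt_trichotomy k l with h2 | rfl | h2
        · rw [maj_gt _ h, maj_lt _ h2]; rfl
        · rw [maj_gt _ h, maj_self]
          fin_cases y <;> rfl
        · rw [maj_gt _ h, maj_gt _ h2]; rfl
    · intro h; exact absurd (Finset.mem_univ j) h
  rw [hstr, hph]
  congr 1
  fin_cases x <;> simp [ltr, phv, Matrix.vecHead, Matrix.vecTail, pow_succ,
    Complex.I_sq] <;> ring

lemma z_mul_z {n : ℕ} (k l : Fin n) (h : k ≠ l) :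
    PauliMat (zString k) * PauliMat (zString l) = PauliMat (zzString k l) := by
  rw [PauliMat_mul]
  have hstr : (fun i => pmul (zString k i) (zString l i)) = zzString k l := by
    funext m
    by_cases h1 : m = k
    · have hml : m ≠ l := by rw [h1]; exact h
      have e1 : zString k m = 3 := by simp [zString, h1]
      have e2 : zString l m = 0 := by simp [zString, hml]
      have e3 : zzString k l m = 3 := by simp [zzString, h1]
      rw [e1, e2, e3]; decide
    · by_cases h2 : m = l
      · have e1 : zString k m = 0 := by simp [zString, h1]
        have e2 : zString l m = 3 := by simp [zString, h2]
        have e3 : zzString k l m = 3 := by simp [zzString, h2]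
        rw [e1, e2, e3]; decide
      · have e1 : zString k m = 0 := by simp [zString, h1]
        have e2 : zString l m = 0 := by simp [zString, h2]
        have e3 : zzString k l m = 0 := by simp [zzString, h1, h2]
        rw [e1, e2, e3]; decide
  have hph : (∏ i, (Complex.I ^ phv (zString k i) (zString l i))) = 1 := by
    apply Finset.prod_eq_one
    intro m _
    by_cases h1 : m = k
    · subst h1; simp only [zString, if_pos rfl, if_neg h]; rfl
    · by_cases h2 : m = l
      · subst h2; simp only [zString, if_neg h1, if_pos rfl]; rfl
      · simp only [zString, if_neg h1, if_neg h2]; rfl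
  rw [hstr, hph, one_smul]

lemma zz_ladder_expr {n : ℕ} (p q j l : Fin n) (hpq : p ≠ q) (hjl : j < l)
    (cp cq x y : Fin 2) :
    W [(p, cp), (p, cp + 1), (q, cq), (q, cq + 1), (j, x + 1), (l, y)] =
      (((-1 : ℂ) ^ ((cp : ℕ) + (cq : ℕ) + (x : ℕ))) * (- Complex.I)) •
        (PauliMat (zzString p q) * PauliMat (ladderString j l (ltr x) (ltr y))) := by
  have hW : W [(p, cp), (p, cp + 1), (q, cq), (q, cq + 1), (j, x + 1), (l, y)]
      = (MJ (p, cp) * MJ (p, cp + 1)) * ((MJ (q, cq) * MJ (q, cq + 1)) *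
          W [(j, x + 1), (l, y)]) := by
    simp only [W_cons, W_nil, mul_one, mul_assoc]
  rw [hW, MJ_pair_same, MJ_pair_same, ladder_expr j l hjl x y]
  simp only [smul_mul_assoc, mul_smul_comm, smul_smul]
  rw [← mul_assoc (PauliMat (zString p)), z_mul_z p q hpq]
  congr 1
  have h3 : Complex.I ^ 3 = -Complex.I := by
    rw [pow_succ, Complex.I_sq]; ring
  rw [pow_add, pow_add]
  linear_combination ((-1 : ℂ) ^ (cp : ℕ) * (-1) ^ (cq : ℕ) * (-1) ^ (x : ℕ)) * h3

lemma ladder_symm {n : ℕ} (i j : Fin n) (A : Fin 4) :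
    ladderString i j A A = ladderString j i A A := by
  funext m
  by_cases h1 : m = i <;> by_cases h2 : m = j <;>
    simp [ladderString, h1, h2, min_comm, max_comm]

lemma W_swap_mid {n : ℕ} (P S : List (Lab n)) (x y : Lab n) (h : x ≠ y) :
    W (P ++ x :: y :: S) = -W (P ++ y :: x :: S) := by
  rw [W_append, W_append, W_swap x y h S, mul_neg]

lemma ladder_target {n : ℕ} (j l : Fin n) (hjl : j < l) (x y : Fin 2) :
    Complex.I • PauliMat (ladderString j l (ltr x) (ltr y)) =
      ((-1 : ℂ) ^ (x : ℕ)) • W [(j, x + 1), (l, y)] := by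
  rw [ladder_expr j l hjl x y, smul_smul]
  congr 1
  have h : ((-1 : ℂ)) ^ (x : ℕ) * (-1) ^ (x : ℕ) = 1 := by rw [← mul_pow]; norm_num
  linear_combination (-Complex.I) * h

lemma zz_expr {n : ℕ} (p q : Fin n) (hpq : p ≠ q) (cp cq : Fin 2) :
    W [(p, cp), (p, cp + 1), (q, cq), (q, cq + 1)] =
      ((-1 : ℂ) ^ ((cp : ℕ) + (cq : ℕ) + 1)) • PauliMat (zzString p q) := by
  have hW : W [(p, cp), (p, cp + 1), (q, cq), (q, cq + 1)]
      = (MJ (p, cp) * MJ (p, cp + 1)) * (MJ (q, cq) * MJ (q, cq + 1)) := by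
    simp [W_cons, W_nil, mul_assoc]
  rw [hW, MJ_pair_same, MJ_pair_same, smul_mul_assoc, mul_smul_comm, smul_smul,
    z_mul_z p q hpq]
  congr 1
  rw [pow_add, pow_add]
  linear_combination ((-1 : ℂ) ^ (cp : ℕ) * (-1) ^ (cq : ℕ)) * Complex.I_mul_I

lemma zz_ladder_target {n : ℕ} (p q j l : Fin n) (hpq : p ≠ q) (hpj : p ≠ j)
    (hqj : q ≠ j) (hjl : j < l) (cp cq x y : Fin 2) :
    Complex.I • (PauliMat (zzString p q) * PauliMat (ladderString j l (ltr x) (ltr y)))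
      = ((-1 : ℂ) ^ ((cp : ℕ) + (cq : ℕ) + (x : ℕ))) •
          W [(p, cp), (q, cq), (j, x + 1), (p, cp + 1), (q, cq + 1), (l, y)] := by
  have s1 : W [(p, cp), (q, cq), (j, x + 1), (p, cp + 1), (q, cq + 1), (l, y)]
      = -W [(p, cp), (q, cq), (p, cp + 1), (j, x + 1), (q, cq + 1), (l, y)] :=
    W_swap_mid [(p, cp), (q, cq)] [(q, cq + 1), (l, y)] (j, x + 1) (p, cp + 1)
      (fun e => hpj (congrArg Prod.fst e).symm)
  have s2 : W [(p, cp), (q, cq), (p, cp + 1), (j, x + 1), (q, cq + 1), (l, y)]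
      = -W [(p, cp), (p, cp + 1), (q, cq), (j, x + 1), (q, cq + 1), (l, y)] :=
    W_swap_mid [(p, cp)] [(j, x + 1), (q, cq + 1), (l, y)] (q, cq) (p, cp + 1)
      (fun e => hpq (congrArg Prod.fst e).symm)
  have s3 : W [(p, cp), (p, cp + 1), (q, cq), (j, x + 1), (q, cq + 1), (l, y)]
      = -W [(p, cp), (p, cp + 1), (q, cq), (q, cq + 1), (j, x + 1), (l, y)] :=
    W_swap_mid [(p, cp), (p, cp + 1), (q, cq)] [(l, y)] (j, x + 1) (q, cq + 1)
      (fun e => hqj (congrArg Prod.fst e).symm)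
  rw [s1, s2, s3, neg_neg, zz_ladder_expr p q j l hpq hjl cp cq x y, smul_neg,
    smul_smul, ← neg_smul]
  congr 1
  have h : ((-1 : ℂ)) ^ ((cp : ℕ) + (cq : ℕ) + (x : ℕ)) *
      (-1) ^ ((cp : ℕ) + (cq : ℕ) + (x : ℕ)) = 1 := by rw [← mul_pow]; norm_num
  linear_combination (-Complex.I) * h

section MemHelpers

variable {n : ℕ} {H : LieSubalgebra ℝ (Matrix (Fin n → Fin 2) (Fin n → Fin 2) ℂ)}

lemma mem_of_neg_mem {x : Matrix (Fin n → Fin 2) (Fin n → Fin 2) ℂ}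
    (h : -x ∈ H) : x ∈ H := by
  have := H.smul_mem (-1 : ℝ) h
  simpa using this

lemma neg_mem_of_mem {x : Matrix (Fin n → Fin 2) (Fin n → Fin 2) ℂ}
    (h : x ∈ H) : -x ∈ H := by
  have := H.smul_mem (-1 : ℝ) h
  simpa using this

lemma mem_of_two_smul {x : Matrix (Fin n → Fin 2) (Fin n → Fin 2) ℂ}
    (h : (2 : ℂ) • x ∈ H) : x ∈ H := by
  have h2 : (2 : ℂ) • x = (2 : ℝ) • x := by
    rw [show ((2 : ℂ)) = (2 : ℝ) • (1 : ℂ) by simp [Complex.real_smul], smul_assoc,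
      one_smul]
  rw [h2] at h
  have := H.smul_mem ((2 : ℝ)⁻¹) h
  rwa [smul_smul, inv_mul_cancel₀ (by norm_num : (2:ℝ) ≠ 0), one_smul] at this

lemma mem_sign_smul (m : ℕ) {y : Matrix (Fin n → Fin 2) (Fin n → Fin 2) ℂ}
    (hy : y ∈ H) : ((-1 : ℂ) ^ m) • y ∈ H := by
  rcases neg_one_pow_eq_or ℂ m with e | e <;> rw [e]
  · rwa [one_smul]
  · rw [neg_one_smul]; exact neg_mem_of_mem hy

lemma mem_of_sign_smul (m : ℕ) {y : Matrix (Fin n → Fin 2) (Fin n → Fin 2) ℂ}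
    (hy : ((-1 : ℂ) ^ m) • y ∈ H) : y ∈ H := by
  rcases neg_one_pow_eq_or ℂ m with e | e <;> rw [e] at hy
  · rwa [one_smul] at hy
  · rw [neg_one_smul] at hy; exact mem_of_neg_mem hy

lemma memW_perm {c : ℂ} {L L' : List (Lab n)} (hnd : L.Nodup) (hp : L.Perm L')
    (h : c • W L ∈ H) : c • W L' ∈ H := by
  rcases W_perm hp hnd with e | e
  · rwa [← e]
  · have e2 : W L' = -W L := by rw [e, neg_neg]
    rw [e2, smul_neg]
    exact neg_mem_of_mem h

lemma memW_bracket (c d : ℂ) (X Y : List (Lab n)) (sl : Lab n)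
    (h1 : sl ∉ X) (h2 : sl ∉ Y) (h3 : ∀ x ∈ X, x ∉ Y)
    (h4 : Odd (X.length * Y.length + X.length + Y.length))
    (hx : c • W (X ++ [sl]) ∈ H) (hy : d • W (sl :: Y) ∈ H) :
    (c * d) • W (X ++ Y) ∈ H := by
  have hb := H.lie_mem hx hy
  rw [smul_lie, lie_smul, W_bracket X Y sl h1 h2 h3 h4] at hb
  apply mem_of_two_smul
  have e : (2 : ℂ) • ((c * d) • W (X ++ Y)) = c • d • (2 : ℂ) • W (X ++ Y) := by
    rw [smul_smul, smul_smul, smul_smul]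
    congr 1
    ring
  rw [e]
  exact hb

end MemHelpers

lemma ltrBar_eq (c : Fin 2) : ltrBar c = ltr (c + 1) := by
  fin_cases c <;> rfl

lemma nodup4 {α : Type*} (a b c d : α) (h1 : a ≠ b) (h2 : a ≠ c) (h3 : a ≠ d)
    (h4 : b ≠ c) (h5 : b ≠ d) (h6 : c ≠ d) : ([a, b, c, d] : List α).Nodup := by
  simp [h1, h2, h3, h4, h5, h6]

lemma notmem1 {α : Type*} {a x : α} (h : a ≠ x) : a ∉ ([x] : List α) := by
  simp [h]

lemma notmem3 {α : Type*} {a x y w : α} (h1 : a ≠ x) (h2 : a ≠ y) (h3 : a ≠ w) :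
    a ∉ ([x, y, w] : List α) := by
  simp [h1, h2, h3]

end Rung

open Fin.NatCast

open Rung in
/-- Lemma 2: there are choices of X/Y letters `a i` (spin up) and `b i` (spin down)
such that the long strings `→X_{u 0}P^u_i`, `→Y_{u 0}\bar P^u_i` (and spin-down
analogues) lie in `g(S₁)`, and moreover the rung strings
`Z_{d 0}Z_{d i}·→P^u_i \bar P^u_{i+1}`, `Z_{d 0}Z_{d i}·→\bar P^u_i P^u_{i+1}`,
`Z_{u 0}Z_{u i}·→P^d_i \bar P^d_{i+1}`, `Z_{u 0}Z_{u i}·→\bar P^d_i P^d_{i+1}`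
lie in `g(S₁)`. -/
theorem rung_strings_mem_hamAlg (N : ℕ) (hN : 1 ≤ N)
    (G : SimpleGraph (Fin N)) (hG : G.Connected)
    (u d : Fin N → Fin (2 * N)) (hu : StrictMono u) (hd : StrictMono d)
    (hdisj : Disjoint (Set.range u) (Set.range d))
    (hunion : Set.range u ∪ Set.range d = Set.univ) :
    ∃ a b : Fin N → Fin 2,
      (∀ i : Fin N, 1 ≤ i.val →
        (Complex.I • PauliMat (ladderString (u ⟨0, hN⟩) (u i) 1 (ltr (a i))) ∈
            hamAlg (Sint G u d ⟨0, hN⟩) ∧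
         Complex.I • PauliMat (ladderString (u ⟨0, hN⟩) (u i) 2 (ltrBar (a i))) ∈
            hamAlg (Sint G u d ⟨0, hN⟩) ∧
         Complex.I • PauliMat (ladderString (d ⟨0, hN⟩) (d i) 1 (ltr (b i))) ∈
            hamAlg (Sint G u d ⟨0, hN⟩) ∧
         Complex.I • PauliMat (ladderString (d ⟨0, hN⟩) (d i) 2 (ltrBar (b i))) ∈
            hamAlg (Sint G u d ⟨0, hN⟩))) ∧
      (∀ i : ℕ, ∀ _h1 : 1 ≤ i, ∀ h2 : i + 1 < N,
        (Complex.I • (PauliMat (zzString (d ⟨0, hN⟩) (d ⟨i, by omega⟩)) *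
              PauliMat (ladderString (u ⟨i, by omega⟩) (u ⟨i + 1, h2⟩)
                (ltr (a ⟨i, by omega⟩)) (ltrBar (a ⟨i + 1, h2⟩)))) ∈
            hamAlg (Sint G u d ⟨0, hN⟩) ∧
         Complex.I • (PauliMat (zzString (d ⟨0, hN⟩) (d ⟨i, by omega⟩)) *
              PauliMat (ladderString (u ⟨i, by omega⟩) (u ⟨i + 1, h2⟩)
                (ltrBar (a ⟨i, by omega⟩)) (ltr (a ⟨i + 1, h2⟩)))) ∈
            hamAlg (Sint G u d ⟨0, hN⟩) ∧
         Complex.I • (PauliMat (zzString (u ⟨0, hN⟩) (u ⟨i, by omega⟩)) *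
              PauliMat (ladderString (d ⟨i, by omega⟩) (d ⟨i + 1, h2⟩)
                (ltr (b ⟨i, by omega⟩)) (ltrBar (b ⟨i + 1, h2⟩)))) ∈
            hamAlg (Sint G u d ⟨0, hN⟩) ∧
         Complex.I • (PauliMat (zzString (u ⟨0, hN⟩) (u ⟨i, by omega⟩)) *
              PauliMat (ladderString (d ⟨i, by omega⟩) (d ⟨i + 1, h2⟩)
                (ltrBar (b ⟨i, by omega⟩)) (ltr (b ⟨i + 1, h2⟩)))) ∈
            hamAlg (Sint G u d ⟨0, hN⟩))) := by
  classical
  set z : Fin N := ⟨0, hN⟩ with hzdef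
  set H := hamAlg (Sint G u d z) with hHdef
  -- site distinctness
  have hudne : ∀ i j : Fin N, u i ≠ d j := by
    intro i j e
    exact Set.disjoint_left.mp hdisj (Set.mem_range_self i) (e ▸ Set.mem_range_self j)
  have hdune : ∀ i j : Fin N, d i ≠ u j := fun i j e => (hudne j i) e.symm
  have huu : ∀ {i j : Fin N}, i ≠ j → u i ≠ u j := by
    intro i j h e; exact h (hu.injective e)
  have hdd : ∀ {i j : Fin N}, i ≠ j → d i ≠ d j := by
    intro i j h e; exact h (hd.injective e)
  have f2ne : ∀ s : Fin 2, s ≠ s + 1 := by decide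
  have f2add : ∀ s : Fin 2, s + 1 + 1 = s := by decide
  have Lne : ∀ {p q : Fin (2*N)} (x y : Fin 2), p ≠ q →
      ((p, x) : Lab (2*N)) ≠ (q, y) := by
    intro p q x y h e; exact h (congrArg Prod.fst e)
  have Lne2 : ∀ (p : Fin (2*N)) {x y : Fin 2}, x ≠ y →
      ((p, x) : Lab (2*N)) ≠ (p, y) := by
    intro p x y h e; exact h (congrArg Prod.snd e)
  -- generators
  have hgenS : ∀ p ∈ Sint G u d z, Complex.I • PauliMat p ∈ H :=
    fun p hp => LieSubalgebra.subset_lieSpan ⟨p, hp, rfl⟩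
  -- edge pairs
  have hpair_edge : ∀ (v : Fin N → Fin (2*N)), StrictMono v →
      (∀ k l : Fin N, G.Adj k l →
        ladderString (v k) (v l) 1 1 ∈ Sint G u d z ∧
        ladderString (v k) (v l) 2 2 ∈ Sint G u d z) →
      ∀ k l : Fin N, G.Adj k l → ∀ x : Fin 2, W [(v k, x), (v l, x + 1)] ∈ H := by
    intro v hv hSv k l hadj x
    have hkl : k ≠ l := G.ne_of_adj hadj
    have hgen' : ∀ c : Fin 2,
        Complex.I • PauliMat (ladderString (v k) (v l) (ltr c) (ltr c)) ∈ H := by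
      intro c
      by_cases hc : c = 0
      · rw [hc, show ltr 0 = 1 from rfl]
        exact hgenS _ (hSv k l hadj).1
      · have hc1 : c = 1 := by
          have h2 := c.is_lt
          have h0 : c.val ≠ 0 := fun e => hc (Fin.ext (by simp [e]))
          apply Fin.ext
          simp only [Fin.val_one]
          omega
        rw [hc1, show ltr 1 = 2 from rfl]
        exact hgenS _ (hSv k l hadj).2
    rcases lt_trichotomy k l with h | h | h
    · have e := ladder_target (v k) (v l) (hv h) (x + 1) (x + 1)
      have hg := hgen' (x + 1)
      rw [e] at hg
      rw [f2add x] at hg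
      exact mem_of_sign_smul _ hg
    · exact absurd h hkl
    · have e := ladder_target (v l) (v k) (hv h) x x
      have hg := hgen' x
      rw [ladder_symm, e] at hg
      have hg2 := mem_of_sign_smul _ hg
      have hsw := W_swap (v l, x + 1) (v k, x) (Lne _ _ (hv h).ne) ([] : List (Lab (2*N)))
      rw [hsw] at hg2
      exact mem_of_neg_mem hg2

  -- pair composition
  have hcomp : ∀ p q r : Lab (2*N), p ≠ q → q ≠ r → p ≠ r →
      W [p, q] ∈ H → W [q, r] ∈ H → W [p, r] ∈ H := by
    intro p q r h1 h2 h3 m1 m2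
    have hb : ⁅W [p, q], W [q, r]⁆ = (2 : ℂ) • W [p, r] :=
      W_bracket [p] [r] q (notmem1 h1.symm) (notmem1 h2)
        (by intro x hx
            rw [List.mem_singleton] at hx
            subst hx
            exact notmem1 h3)
        ((by decide : Odd (1 * 1 + 1 + 1)))
    have hm := H.lie_mem m1 m2
    rw [hb] at hm
    exact mem_of_two_smul hm
  -- chains along walks
  have hchain : ∀ (v : Fin N → Fin (2*N)), Function.Injective v →
      (∀ k l : Fin N, G.Adj k l → ∀ x : Fin 2, W [(v k, x), (v l, x + 1)] ∈ H) →
      ∀ (p q : Fin N × Fin 2),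
        Relation.ReflTransGen (fun p q => G.Adj p.1 q.1 ∧ q.2 = p.2 + 1) p q →
        p ≠ q → W [(v p.1, p.2), (v q.1, q.2)] ∈ H := by
    intro v hv hg p q hrtg
    have hvlab : ∀ (s t : Fin N × Fin 2), s ≠ t → ((v s.1, s.2) : Lab (2*N)) ≠ (v t.1, t.2) := by
      intro s t hst e
      apply hst
      have e1 := congrArg Prod.fst e
      have e2 := congrArg Prod.snd e
      simp only [] at e1 e2
      exact Prod.ext_iff.mpr ⟨hv e1, e2⟩
    induction hrtg with
    | refl => exact fun h => absurd rfl h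
    | @tail b c hab hbc ih =>
      intro hpc
      by_cases hpb : p = b
      · rcases hbc with ⟨hadj, he⟩
        rw [he, hpb]
        exact hg b.1 c.1 hadj b.2
      · have h1 := ih hpb
        rcases hbc with ⟨hadj, he⟩
        have h2 : W [(v b.1, b.2), (v c.1, c.2)] ∈ H := by
          rw [he]; exact hg b.1 c.1 hadj b.2
        have hbc' : b ≠ c := by
          intro e
          rw [e] at he
          exact f2ne c.2 he
        exact hcomp _ _ _ (hvlab p b hpb) (hvlab b c hbc') (hvlab p c hpc) h1 h2
  -- walks give reachability with parity
  have hwalk : ∀ (k l : Fin N) (w : G.Walk k l) (x : Fin 2),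
      Relation.ReflTransGen (fun p q => G.Adj p.1 q.1 ∧ q.2 = p.2 + 1)
        (k, x) (l, x + (w.length : Fin 2)) := by
    intro k l w
    induction w with
    | nil => intro x; simpa using Relation.ReflTransGen.refl
    | @cons k k' l hadj p ih =>
      intro x
      have e : x + ((p.length + 1 : ℕ) : Fin 2) = (x + 1) + (p.length : Fin 2) := by
        push_cast
        abel
      rw [SimpleGraph.Walk.length_cons, e]
      exact Relation.ReflTransGen.head ⟨hadj, rfl⟩ (ih (x + 1))
  -- membership of generating strings
  have hSu : ∀ k l : Fin N, G.Adj k l →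
      ladderString (u k) (u l) 1 1 ∈ Sint G u d z ∧
      ladderString (u k) (u l) 2 2 ∈ Sint G u d z :=
    fun k l hadj => ⟨Or.inl (Or.inl ⟨k, l, hadj, Or.inl rfl⟩),
      Or.inl (Or.inl ⟨k, l, hadj, Or.inr rfl⟩)⟩
  have hSd : ∀ k l : Fin N, G.Adj k l →
      ladderString (d k) (d l) 1 1 ∈ Sint G u d z ∧
      ladderString (d k) (d l) 2 2 ∈ Sint G u d z :=
    fun k l hadj => ⟨Or.inl (Or.inr ⟨k, l, hadj, Or.inl rfl⟩),
      Or.inl (Or.inr ⟨k, l, hadj, Or.inr rfl⟩)⟩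
  have hgu := hpair_edge u hu hSu
  have hgd := hpair_edge d hd hSd
  -- choice of letters
  have hmain : ∀ i : Fin N, ∃ c : Fin 2, i ≠ z →
      ∀ s : Fin 2, W [(u z, s + 1), (u i, c + s)] ∈ H ∧
        W [(d z, s + 1), (d i, c + s)] ∈ H := by
    intro i
    obtain ⟨w⟩ := hG.preconnected z i
    refine ⟨1 + (w.length : Fin 2), fun hi s => ?_⟩
    have hpq : ((z, s + 1) : Fin N × Fin 2) ≠ (i, (s + 1) + (w.length : Fin 2)) :=
      fun e => hi ((congrArg Prod.fst e).symm)
    have hr := hwalk z i w (s + 1)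
    have e2 : (s + 1) + (w.length : Fin 2) = (1 + (w.length : Fin 2)) + s := by abel
    constructor
    · have hc := hchain u hu.injective hgu (z, s + 1) (i, (s + 1) + (w.length : Fin 2)) hr hpq
      rwa [e2] at hc
    · have hc := hchain d hd.injective hgd (z, s + 1) (i, (s + 1) + (w.length : Fin 2)) hr hpq
      rwa [e2] at hc
  choose a ha using hmain
  have hp_u : ∀ i : Fin N, i ≠ z → ∀ s : Fin 2,
      W [(u z, s + 1), (u i, a i + s)] ∈ H := fun i hi s => (ha i hi s).1
  have hp_d : ∀ i : Fin N, i ≠ z → ∀ s : Fin 2,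
      W [(d z, s + 1), (d i, a i + s)] ∈ H := fun i hi s => (ha i hi s).2

  -- interaction generator as a Majorana 4-word
  have hzzgen : Complex.I • PauliMat (zzString (u z) (d z)) ∈ H := hgenS _ (Or.inr rfl)
  have hE4 : Complex.I • W [(u z, 0), (u z, 1), (d z, 0), (d z, 1)] ∈ H := by
    have e := zz_expr (u z) (d z) (hudne z z) 0 0
    rw [show ((0 : Fin 2) + 1) = 1 from rfl] at e
    rw [e, smul_comm]
    exact mem_sign_smul _ hzzgen
  have hq : ∀ s : Fin 2,
      Complex.I • W [(u z, s + 1), (u z, s), (d z, 0), (d z, 1)] ∈ H := by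
    intro s
    fin_cases s
    · exact memW_perm
        (nodup4 _ _ _ _ (Lne2 _ (by decide)) (Lne _ _ (hudne z z))
          (Lne _ _ (hudne z z)) (Lne _ _ (hudne z z)) (Lne _ _ (hudne z z))
          (Lne2 _ (by decide)))
        (List.Perm.swap _ _ _) hE4
    · exact hE4
  have hK : ∀ s : Fin 2, ∀ k : Fin N, k ≠ z →
      Complex.I • W [(u k, a k + s), (u z, s), (d z, 0), (d z, 1)] ∈ H := by
    intro s k hk
    have h0 := hp_u k hk s
    have hsw := W_swap (u z, s + 1) (u k, a k + s)
      (Lne _ _ (huu (Ne.symm hk))) ([] : List (Lab (2*N)))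
    rw [hsw] at h0
    have h1' : (1 : ℂ) • W [(u k, a k + s), (u z, s + 1)] ∈ H := by
      rw [one_smul]
      exact mem_of_neg_mem h0
    have hb := memW_bracket (H := H) 1 Complex.I [(u k, a k + s)]
      [(u z, s), (d z, 0), (d z, 1)] (u z, s + 1)
      (notmem1 (Lne _ _ (huu (Ne.symm hk))))
      (notmem3 (Lne2 _ (f2ne s).symm) (Lne _ _ (hudne z z)) (Lne _ _ (hudne z z)))
      (by intro x hx
          rw [List.mem_singleton] at hx
          subst hx
          exact notmem3 (Lne _ _ (huu hk)) (Lne _ _ (hudne k z)) (Lne _ _ (hudne k z)))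
      ((by decide : Odd (1 * 3 + 1 + 3)))
      h1' (hq s)
    rwa [one_mul] at hb
  have hK' : ∀ s t : Fin 2, ∀ k : Fin N, k ≠ z →
      Complex.I • W [(u k, a k + s), (u z, s), (d z, t), (d z, t + 1)] ∈ H := by
    intro s t k hk
    fin_cases t
    · exact hK s k hk
    · refine memW_perm ?_ ?_ (hK s k hk)
      · exact nodup4 _ _ _ _ (Lne _ _ (huu hk)) (Lne _ _ (hudne k z))
          (Lne _ _ (hudne k z)) (Lne _ _ (hudne z z)) (Lne _ _ (hudne z z))
          (Lne2 _ (by decide))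
      · exact List.Perm.cons _ (List.Perm.cons _ (List.Perm.swap _ _ _))
  have hM : ∀ s t : Fin 2, ∀ k : Fin N, k ≠ z → ∀ l : Fin N, l ≠ z →
      Complex.I • W [(u k, a k + s), (u z, s), (d z, t), (d l, a l + t)] ∈ H := by
    intro s t k hk l hl
    have hx := hK' s t k hk
    have hy' : (1 : ℂ) • W [(d z, t + 1), (d l, a l + t)] ∈ H := by
      rw [one_smul]
      exact hp_d l hl t
    have hb := memW_bracket (H := H) Complex.I 1 [(u k, a k + s), (u z, s), (d z, t)]
      [(d l, a l + t)] (d z, t + 1)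
      (notmem3 (Lne _ _ (hdune z k)) (Lne _ _ (hdune z z)) (Lne2 _ (f2ne t).symm))
      (notmem1 (Lne _ _ (hdd (Ne.symm hl))))
      (by intro x hx2
          rcases List.mem_cons.mp hx2 with rfl | hx2
          · exact notmem1 (Lne _ _ (hudne k l))
          rcases List.mem_cons.mp hx2 with rfl | hx2
          · exact notmem1 (Lne _ _ (hudne z l))
          rcases List.mem_cons.mp hx2 with rfl | hx2
          · exact notmem1 (Lne _ _ (hdd (Ne.symm hl)))
          · exact absurd hx2 List.not_mem_nil)
      ((by decide : Odd (3 * 1 + 3 + 1)))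
      hx hy'
    rwa [mul_one] at hb

  -- generic rung lemma
  have hrung : ∀ i1 i2 : Fin N, i1 ≠ z → i2 ≠ z → i1 < i2 →
      (Complex.I • (PauliMat (zzString (d z) (d i1)) *
          PauliMat (ladderString (u i1) (u i2) (ltr (a i1)) (ltrBar (a i2)))) ∈ H ∧
       Complex.I • (PauliMat (zzString (d z) (d i1)) *
          PauliMat (ladderString (u i1) (u i2) (ltrBar (a i1)) (ltr (a i2)))) ∈ H ∧
       Complex.I • (PauliMat (zzString (u z) (u i1)) *
          PauliMat (ladderString (d i1) (d i2) (ltr (a i1)) (ltrBar (a i2)))) ∈ H ∧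
       Complex.I • (PauliMat (zzString (u z) (u i1)) *
          PauliMat (ladderString (d i1) (d i2) (ltrBar (a i1)) (ltr (a i2)))) ∈ H) := by
    intro i1 i2 hi1z hi2z h12
    have h12' : i1 ≠ i2 := ne_of_lt h12
    have ndM : ∀ (s t : Fin 2) (k l : Fin N), k ≠ z → l ≠ z →
        ([(u k, a k + s), (u z, s), (d z, t), (d l, a l + t)] : List (Lab (2*N))).Nodup :=
      fun s t k l hk hl => nodup4 _ _ _ _ (Lne _ _ (huu hk)) (Lne _ _ (hudne k z))
        (Lne _ _ (hudne k l)) (Lne _ _ (hudne z z)) (Lne _ _ (hudne z l))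
        (Lne _ _ (hdd (Ne.symm hl)))
    have ndM' : ∀ (s t : Fin 2) (k l : Fin N), k ≠ z → l ≠ z →
        ([(u k, a k + s), (u z, s), (d z, t), (d l, a l + t + 1)] : List (Lab (2*N))).Nodup :=
      fun s t k l hk hl => nodup4 _ _ _ _ (Lne _ _ (huu hk)) (Lne _ _ (hudne k z))
        (Lne _ _ (hudne k l)) (Lne _ _ (hudne z z)) (Lne _ _ (hudne z l))
        (Lne _ _ (hdd (Ne.symm hl)))
    -- cleaned quartics
    have M10 : Complex.I • W [(u i1, a i1 + 1), (u z, 1), (d z, 0), (d i1, a i1)] ∈ H := by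
      have h := hM 1 0 i1 hi1z i1 hi1z
      simpa only [add_zero] using h
    have M11 : Complex.I • W [(u i2, a i2 + 1), (u z, 1), (d z, 1), (d i1, a i1 + 1)] ∈ H :=
      hM 1 1 i2 hi2z i1 hi1z
    have M00 : Complex.I • W [(u i1, a i1), (u z, 0), (d z, 0), (d i1, a i1)] ∈ H := by
      have h := hM 0 0 i1 hi1z i1 hi1z
      simpa only [add_zero] using h
    have M01 : Complex.I • W [(u i2, a i2), (u z, 0), (d z, 1), (d i1, a i1 + 1)] ∈ H := by
      have h := hM 0 1 i2 hi2z i1 hi1z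
      simpa only [add_zero] using h
    have M01' : Complex.I • W [(u i1, a i1), (u z, 0), (d z, 1), (d i1, a i1 + 1)] ∈ H := by
      have h := hM 0 1 i1 hi1z i1 hi1z
      simpa only [add_zero] using h
    have M11' : Complex.I • W [(u i1, a i1 + 1), (u z, 1), (d z, 1), (d i2, a i2 + 1)] ∈ H :=
      hM 1 1 i1 hi1z i2 hi2z
    have M10' : Complex.I • W [(u i1, a i1 + 1), (u z, 1), (d z, 0), (d i2, a i2)] ∈ H := by
      have h := hM 1 0 i1 hi1z i2 hi2z
      simpa only [add_zero] using h
    -- nodups for the cleaned lists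
    have nd1 : ([(u i1, a i1 + 1), (u z, 1), (d z, 0), (d i1, a i1)] : List (Lab (2*N))).Nodup :=
      nodup4 _ _ _ _ (Lne _ _ (huu hi1z)) (Lne _ _ (hudne i1 z)) (Lne _ _ (hudne i1 i1))
        (Lne _ _ (hudne z z)) (Lne _ _ (hudne z i1)) (Lne _ _ (hdd (Ne.symm hi1z)))
    have nd2 : ([(u i2, a i2 + 1), (u z, 1), (d z, 1), (d i1, a i1 + 1)] : List (Lab (2*N))).Nodup :=
      nodup4 _ _ _ _ (Lne _ _ (huu hi2z)) (Lne _ _ (hudne i2 z)) (Lne _ _ (hudne i2 i1))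
        (Lne _ _ (hudne z z)) (Lne _ _ (hudne z i1)) (Lne _ _ (hdd (Ne.symm hi1z)))
    have nd3 : ([(u i1, a i1), (u z, 0), (d z, 0), (d i1, a i1)] : List (Lab (2*N))).Nodup :=
      nodup4 _ _ _ _ (Lne _ _ (huu hi1z)) (Lne _ _ (hudne i1 z)) (Lne _ _ (hudne i1 i1))
        (Lne _ _ (hudne z z)) (Lne _ _ (hudne z i1)) (Lne _ _ (hdd (Ne.symm hi1z)))
    have nd4 : ([(u i2, a i2), (u z, 0), (d z, 1), (d i1, a i1 + 1)] : List (Lab (2*N))).Nodup :=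
      nodup4 _ _ _ _ (Lne _ _ (huu hi2z)) (Lne _ _ (hudne i2 z)) (Lne _ _ (hudne i2 i1))
        (Lne _ _ (hudne z z)) (Lne _ _ (hudne z i1)) (Lne _ _ (hdd (Ne.symm hi1z)))
    have nd5 : ([(u i1, a i1), (u z, 0), (d z, 1), (d i1, a i1 + 1)] : List (Lab (2*N))).Nodup :=
      nodup4 _ _ _ _ (Lne _ _ (huu hi1z)) (Lne _ _ (hudne i1 z)) (Lne _ _ (hudne i1 i1))
        (Lne _ _ (hudne z z)) (Lne _ _ (hudne z i1)) (Lne _ _ (hdd (Ne.symm hi1z)))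
    have nd6 : ([(u i1, a i1 + 1), (u z, 1), (d z, 1), (d i2, a i2 + 1)] : List (Lab (2*N))).Nodup :=
      nodup4 _ _ _ _ (Lne _ _ (huu hi1z)) (Lne _ _ (hudne i1 z)) (Lne _ _ (hudne i1 i2))
        (Lne _ _ (hudne z z)) (Lne _ _ (hudne z i2)) (Lne _ _ (hdd (Ne.symm hi2z)))
    have nd7 : ([(u i1, a i1 + 1), (u z, 1), (d z, 0), (d i2, a i2)] : List (Lab (2*N))).Nodup :=
      nodup4 _ _ _ _ (Lne _ _ (huu hi1z)) (Lne _ _ (hudne i1 z)) (Lne _ _ (hudne i1 i2))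
        (Lne _ _ (hudne z z)) (Lne _ _ (hudne z i2)) (Lne _ _ (hdd (Ne.symm hi2z)))
    -- disjointness for the two bracket shapes
    have disjT12 : ∀ (x1 x2 x3 y1 y2 y3 : Fin 2),
        ∀ x ∈ ([(d z, x1), (d i1, x2), (u i1, x3)] : List (Lab (2*N))), x1 ≠ y1 → x2 ≠ y2 →
          x ∉ ([(d z, y1), (d i1, y2), (u i2, y3)] : List (Lab (2*N))) := by
      intro x1 x2 x3 y1 y2 y3 x hx hne1 hne2
      rcases List.mem_cons.mp hx with rfl | hx
      · exact notmem3 (Lne2 _ hne1) (Lne _ _ (hdd (Ne.symm hi1z))) (Lne _ _ (hdune z i2))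
      rcases List.mem_cons.mp hx with rfl | hx
      · exact notmem3 (Lne _ _ (hdd hi1z)) (Lne2 _ hne2) (Lne _ _ (hdune i1 i2))
      rcases List.mem_cons.mp hx with rfl | hx
      · exact notmem3 (Lne _ _ (hudne i1 z)) (Lne _ _ (hudne i1 i1)) (Lne _ _ (huu h12'))
      · exact absurd hx List.not_mem_nil
    have disjT34 : ∀ (x1 x2 x3 y1 y2 y3 : Fin 2),
        ∀ x ∈ ([(u z, x1), (u i1, x2), (d i1, x3)] : List (Lab (2*N))), x1 ≠ y1 → x2 ≠ y2 →
          x ∉ ([(u z, y1), (u i1, y2), (d i2, y3)] : List (Lab (2*N))) := by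
      intro x1 x2 x3 y1 y2 y3 x hx hne1 hne2
      rcases List.mem_cons.mp hx with rfl | hx
      · exact notmem3 (Lne2 _ hne1) (Lne _ _ (huu (Ne.symm hi1z))) (Lne _ _ (hudne z i2))
      rcases List.mem_cons.mp hx with rfl | hx
      · exact notmem3 (Lne _ _ (huu hi1z)) (Lne2 _ hne2) (Lne _ _ (hudne i1 i2))
      rcases List.mem_cons.mp hx with rfl | hx
      · exact notmem3 (Lne _ _ (hdune i1 z)) (Lne _ _ (hdune i1 i1)) (Lne _ _ (hdd h12'))
      · exact absurd hx List.not_mem_nil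
    refine ⟨?_, ?_, ?_, ?_⟩
    · -- T1
      rw [ltrBar_eq (a i2), zz_ladder_target (d z) (d i1) (u i1) (u i2)
        (hdd (Ne.symm hi1z)) (hdune z i1) (hdune i1 i1) (hu h12) 0 (a i1) (a i1) (a i2 + 1)]
      apply mem_sign_smul
      have F1 : Complex.I • W [(d z, 0), (d i1, a i1), (u i1, a i1 + 1), (u z, 1)] ∈ H :=
        memW_perm nd1 (List.perm_append_comm (l₁ := [(u i1, a i1 + 1), (u z, 1)])
          (l₂ := [(d z, 0), (d i1, a i1)])) M10
      have F2 : Complex.I • W [(u z, 1), (d z, 1), (d i1, a i1 + 1), (u i2, a i2 + 1)] ∈ H :=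
        memW_perm nd2 (List.perm_append_comm (l₁ := [(u i2, a i2 + 1)])
          (l₂ := [(u z, 1), (d z, 1), (d i1, a i1 + 1)])) M11
      have hb := memW_bracket (H := H) Complex.I Complex.I
        [(d z, 0), (d i1, a i1), (u i1, a i1 + 1)]
        [(d z, 1), (d i1, a i1 + 1), (u i2, a i2 + 1)] (u z, 1)
        (notmem3 (Lne _ _ (hudne z z)) (Lne _ _ (hudne z i1)) (Lne _ _ (huu (Ne.symm hi1z))))
        (notmem3 (Lne _ _ (hudne z z)) (Lne _ _ (hudne z i1)) (Lne _ _ (huu (Ne.symm hi2z))))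
        (fun x hx => disjT12 _ _ _ _ _ _ x hx (by decide) (f2ne _))
        ((by decide : Odd (3 * 3 + 3 + 3))) F1 F2
      rw [Complex.I_mul_I, neg_one_smul] at hb
      exact mem_of_neg_mem hb
    · -- T2
      rw [ltrBar_eq (a i1), zz_ladder_target (d z) (d i1) (u i1) (u i2)
        (hdd (Ne.symm hi1z)) (hdune z i1) (hdune i1 i1) (hu h12) 0 (a i1) (a i1 + 1) (a i2)]
      rw [f2add (a i1)]
      apply mem_sign_smul
      have F1 : Complex.I • W [(d z, 0), (d i1, a i1), (u i1, a i1), (u z, 0)] ∈ H :=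
        memW_perm nd3 (List.perm_append_comm (l₁ := [(u i1, a i1), (u z, 0)])
          (l₂ := [(d z, 0), (d i1, a i1)])) M00
      have F2 : Complex.I • W [(u z, 0), (d z, 1), (d i1, a i1 + 1), (u i2, a i2)] ∈ H :=
        memW_perm nd4 (List.perm_append_comm (l₁ := [(u i2, a i2)])
          (l₂ := [(u z, 0), (d z, 1), (d i1, a i1 + 1)])) M01
      have hb := memW_bracket (H := H) Complex.I Complex.I
        [(d z, 0), (d i1, a i1), (u i1, a i1)]
        [(d z, 1), (d i1, a i1 + 1), (u i2, a i2)] (u z, 0)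
        (notmem3 (Lne _ _ (hudne z z)) (Lne _ _ (hudne z i1)) (Lne _ _ (huu (Ne.symm hi1z))))
        (notmem3 (Lne _ _ (hudne z z)) (Lne _ _ (hudne z i1)) (Lne _ _ (huu (Ne.symm hi2z))))
        (fun x hx => disjT12 _ _ _ _ _ _ x hx (by decide) (f2ne _))
        ((by decide : Odd (3 * 3 + 3 + 3))) F1 F2
      rw [Complex.I_mul_I, neg_one_smul] at hb
      exact mem_of_neg_mem hb
    · -- T3
      rw [ltrBar_eq (a i2), zz_ladder_target (u z) (u i1) (d i1) (d i2)
        (huu (Ne.symm hi1z)) (hudne z i1) (hudne i1 i1) (hd h12) 0 (a i1) (a i1) (a i2 + 1)]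
      apply mem_sign_smul
      have F1 : Complex.I • W [(u z, 0), (u i1, a i1), (d i1, a i1 + 1), (d z, 1)] ∈ H :=
        memW_perm nd5 ((List.Perm.swap _ _ _).trans
          (List.Perm.cons _ (List.Perm.cons _ (List.Perm.swap _ _ _)))) M01'
      have F2 : Complex.I • W [(d z, 1), (u z, 1), (u i1, a i1 + 1), (d i2, a i2 + 1)] ∈ H :=
        memW_perm nd6 ((List.Perm.cons _ (List.Perm.swap _ _ _)).trans
          ((List.Perm.swap _ _ _).trans (List.Perm.cons _ (List.Perm.swap _ _ _)))) M11'
      have hb := memW_bracket (H := H) Complex.I Complex.I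
        [(u z, 0), (u i1, a i1), (d i1, a i1 + 1)]
        [(u z, 1), (u i1, a i1 + 1), (d i2, a i2 + 1)] (d z, 1)
        (notmem3 (Lne _ _ (hdune z z)) (Lne _ _ (hdune z i1)) (Lne _ _ (hdd (Ne.symm hi1z))))
        (notmem3 (Lne _ _ (hdune z z)) (Lne _ _ (hdune z i1)) (Lne _ _ (hdd (Ne.symm hi2z))))
        (fun x hx => disjT34 _ _ _ _ _ _ x hx (by decide) (f2ne _))
        ((by decide : Odd (3 * 3 + 3 + 3))) F1 F2
      rw [Complex.I_mul_I, neg_one_smul] at hb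
      exact mem_of_neg_mem hb
    · -- T4
      rw [ltrBar_eq (a i1), zz_ladder_target (u z) (u i1) (d i1) (d i2)
        (huu (Ne.symm hi1z)) (hudne z i1) (hudne i1 i1) (hd h12) 0 (a i1) (a i1 + 1) (a i2)]
      rw [f2add (a i1)]
      apply mem_sign_smul
      have F1 : Complex.I • W [(u z, 0), (u i1, a i1), (d i1, a i1), (d z, 0)] ∈ H :=
        memW_perm nd3 ((List.Perm.swap _ _ _).trans
          (List.Perm.cons _ (List.Perm.cons _ (List.Perm.swap _ _ _)))) M00
      have F2 : Complex.I • W [(d z, 0), (u z, 1), (u i1, a i1 + 1), (d i2, a i2)] ∈ H :=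
        memW_perm nd7 ((List.Perm.cons _ (List.Perm.swap _ _ _)).trans
          ((List.Perm.swap _ _ _).trans (List.Perm.cons _ (List.Perm.swap _ _ _)))) M10'
      have hb := memW_bracket (H := H) Complex.I Complex.I
        [(u z, 0), (u i1, a i1), (d i1, a i1)]
        [(u z, 1), (u i1, a i1 + 1), (d i2, a i2)] (d z, 0)
        (notmem3 (Lne _ _ (hdune z z)) (Lne _ _ (hdune z i1)) (Lne _ _ (hdd (Ne.symm hi1z))))
        (notmem3 (Lne _ _ (hdune z z)) (Lne _ _ (hdune z i1)) (Lne _ _ (hdd (Ne.symm hi2z))))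
        (fun x hx => disjT34 _ _ _ _ _ _ x hx (by decide) (f2ne _))
        ((by decide : Odd (3 * 3 + 3 + 3))) F1 F2
      rw [Complex.I_mul_I, neg_one_smul] at hb
      exact mem_of_neg_mem hb
  refine ⟨a, a, ?_, ?_⟩
  · intro i hi
    have hiz : i ≠ z := by
      intro e
      rw [hzdef] at e
      rw [e] at hi
      exact absurd hi (by simp)
    have hlt : z < i := by
      rw [hzdef, Fin.lt_def]
      simpa using (by omega : 0 < i.val)
    refine ⟨?_, ?_, ?_, ?_⟩
    · rw [show (1 : Fin 4) = ltr 0 from rfl, ladder_target (u z) (u i) (hu hlt) 0 (a i)]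
      apply mem_sign_smul
      simpa using hp_u i hiz 0
    · rw [show (2 : Fin 4) = ltr 1 from rfl, ltrBar_eq (a i),
        ladder_target (u z) (u i) (hu hlt) 1 (a i + 1)]
      apply mem_sign_smul
      exact hp_u i hiz 1
    · rw [show (1 : Fin 4) = ltr 0 from rfl, ladder_target (d z) (d i) (hd hlt) 0 (a i)]
      apply mem_sign_smul
      simpa using hp_d i hiz 0
    · rw [show (2 : Fin 4) = ltr 1 from rfl, ltrBar_eq (a i),
        ladder_target (d z) (d i) (hd hlt) 1 (a i + 1)]
      apply mem_sign_smul
      exact hp_d i hiz 1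
  · intro i h1 h2
    have e1 : (⟨i, by omega⟩ : Fin N) ≠ z := by
      rw [hzdef]
      intro e
      have := congrArg Fin.val e
      simp at this
      omega
    have e2 : (⟨i + 1, h2⟩ : Fin N) ≠ z := by
      rw [hzdef]
      intro e
      have := congrArg Fin.val e
      simp at this
    have e12 : (⟨i, by omega⟩ : Fin N) < (⟨i + 1, h2⟩ : Fin N) := by
      rw [Fin.lt_def]
      simp
    exact hrung ⟨i, by omega⟩ ⟨i + 1, h2⟩ e1 e2 e12
end

section
/- Anderson impurity model: fix N ≥ 1 and work with 2N qubits, where qubits 0,…,N−1 are the spin-up sites and qubits N,…,2N−1 are the spin-down sites, qubits 0 and N being the impurity orbitals. Let S_AIM = {→X_0X_i, →Y_0Y_i : 1 ≤ i ≤ N−1} ∪ {→X_NX_{N+i}, →Y_NY_{N+i} : 1 ≤ i ≤ N−1} ∪ {Z_0Z_N} (the Pauli strings of the Jordan–Wigner transform of the Anderson impurity model with nonzero hybridizations V_i and nonzero interaction U). Then dim g(S_AIM) ≥ 2^(N−1). -/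
open Matrix

attribute [local instance 100] LieRing.ofAssociativeRing

/-- Pauli strings of the Jordan–Wigner transformed Anderson impurity model on `2N`
qubits: hybridization strings between the impurity qubits `0` (spin up) and `N`
(spin down) and the bath qubits, plus the interaction string `Z_0 Z_N`. -/
def S_AIM (N : ℕ) (hN : 1 ≤ N) : Set (Fin (2 * N) → Fin 4) :=
  {p | ∃ i : ℕ, ∃ _h1 : 1 ≤ i, ∃ h2 : i < N,
      p = ladderString (⟨0, by omega⟩ : Fin (2 * N)) ⟨i, by omega⟩ 1 1 ∨
      p = ladderString (⟨0, by omega⟩ : Fin (2 * N)) ⟨i, by omega⟩ 2 2 ∨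
      p = ladderString (⟨N, by omega⟩ : Fin (2 * N)) ⟨N + i, by omega⟩ 1 1 ∨
      p = ladderString (⟨N, by omega⟩ : Fin (2 * N)) ⟨N + i, by omega⟩ 2 2} ∪
  {zzString (⟨0, by omega⟩ : Fin (2 * N)) ⟨N, by omega⟩}

def mulIdx (a b : Fin 4) : Fin 4 :=
  if a = 0 then b else if b = 0 then a else if a = b then 0
  else if a ≠ 1 ∧ b ≠ 1 then 1 else if a ≠ 2 ∧ b ≠ 2 then 2 else 3
noncomputable def ph (a b : Fin 4) : ℂ :=
  if a = 0 ∨ b = 0 ∨ a = b then 1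
  else if (a = 1 ∧ b = 2) ∨ (a = 2 ∧ b = 3) ∨ (a = 3 ∧ b = 1) then Complex.I
  else -Complex.I
lemma mulIdx_comm (a b : Fin 4) : mulIdx a b = mulIdx b a := by
  fin_cases a <;> fin_cases b <;> rfl

lemma mulIdx_eq_zero_iff (a b : Fin 4) : mulIdx a b = 0 ↔ a = b := by
  fin_cases a <;> fin_cases b <;> simp [mulIdx]

lemma pauli_mul (a b : Fin 4) : pauli a * pauli b = ph a b • pauli (mulIdx a b) := by
  fin_cases a <;> fin_cases b <;>
    · ext i j
      fin_cases i <;> fin_cases j <;>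
        simp [pauli, ph, mulIdx, Matrix.mul_apply, Fin.sum_univ_two, Complex.I_mul_I]

lemma ph_sq (a b : Fin 4) :
    ph a b ^ 2 = if a ≠ b ∧ a ≠ 0 ∧ b ≠ 0 then -1 else 1 := by
  fin_cases a <;> fin_cases b <;> simp [ph] <;> ring_nf <;> simp [Complex.I_sq]

lemma ph_swap (a b : Fin 4) :
    ph b a = if a ≠ b ∧ a ≠ 0 ∧ b ≠ 0 then -ph a b else ph a b := by
  fin_cases a <;> fin_cases b <;> simp [ph]

lemma PauliMat_mul {n : ℕ} (p q : Fin n → Fin 4) :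
    PauliMat p * PauliMat q =
      (∏ i, ph (p i) (q i)) • PauliMat (fun i => mulIdx (p i) (q i)) := by
  ext x y
  simp only [Matrix.mul_apply, PauliMat, Matrix.of_apply, Matrix.smul_apply, smul_eq_mul]
  have h1 : ∀ z : Fin n → Fin 2,
      (∏ i, pauli (p i) (x i) (z i)) * ∏ i, pauli (q i) (z i) (y i)
        = ∏ i, (fun i t => pauli (p i) (x i) t * pauli (q i) t (y i)) i (z i) := by
    intro z; rw [← Finset.prod_mul_distrib]
  rw [Finset.sum_congr rfl fun z _ => h1 z]
  rw [show (∑ z : Fin n → Fin 2, ∏ i, (fun i t => pauli (p i) (x i) t * pauli (q i) t (y i)) i (z i))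
      = ∏ i, ∑ t : Fin 2, pauli (p i) (x i) t * pauli (q i) t (y i)
    from (Fintype.prod_sum (fun i t => pauli (p i) (x i) t * pauli (q i) t (y i))).symm]
  have h2 : ∀ i, (∑ t : Fin 2, pauli (p i) (x i) t * pauli (q i) t (y i))
      = ph (p i) (q i) * pauli (mulIdx (p i) (q i)) (x i) (y i) := by
    intro i
    have := congrFun (congrFun (pauli_mul (p i) (q i)) (x i)) (y i)
    simpa [Matrix.mul_apply, Matrix.smul_apply] using this
  rw [Finset.prod_congr rfl fun i _ => h2 i, Finset.prod_mul_distrib]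

lemma pauli_trace (a : Fin 4) : ∑ t : Fin 2, pauli a t t = if a = 0 then 2 else 0 := by
  fin_cases a <;> simp [pauli, Fin.sum_univ_two]

lemma PauliMat_trace {n : ℕ} (p : Fin n → Fin 4) :
    Matrix.trace (PauliMat p) = ∏ i, (if p i = 0 then (2:ℂ) else 0) := by
  simp only [Matrix.trace, Matrix.diag, PauliMat, Matrix.of_apply]
  rw [show (∑ z : Fin n → Fin 2, ∏ i, pauli (p i) (z i) (z i))
      = ∏ i, ∑ t : Fin 2, pauli (p i) t t from (Fintype.prod_sum (fun i t => pauli (p i) t t)).symm]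
  exact Finset.prod_congr rfl fun i _ => pauli_trace (p i)

lemma lie_pauli {n : ℕ} (p q : Fin n → Fin 4)
    (hodd : Odd (Finset.univ.filter fun k => p k ≠ q k ∧ p k ≠ 0 ∧ q k ≠ 0).card) :
    ∃ c : ℝ, c ≠ 0 ∧
      ⁅Complex.I • PauliMat p, Complex.I • PauliMat q⁆
        = c • (Complex.I • PauliMat fun k => mulIdx (p k) (q k)) := by
  classical
  set R := PauliMat fun k => mulIdx (p k) (q k) with hR
  set Φ := ∏ k, ph (p k) (q k) with hΦ
  have hprodsq : Φ ^ 2 = -1 := by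
    rw [hΦ, ← Finset.prod_pow,
      Finset.prod_congr rfl fun k _ => ph_sq (p k) (q k),
      Finset.prod_ite, Finset.prod_const, Finset.prod_const, one_pow, mul_one]
    exact Odd.neg_one_pow hodd
  have hswap : (∏ k, ph (q k) (p k)) = -Φ := by
    have h1 : ∀ k, ph (q k) (p k)
        = (if p k ≠ q k ∧ p k ≠ 0 ∧ q k ≠ 0 then (-1:ℂ) else 1) * ph (p k) (q k) :=
      fun k => by rw [ph_swap]; split_ifs <;> ring
    rw [Finset.prod_congr rfl fun k _ => h1 k, Finset.prod_mul_distrib,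
      Finset.prod_ite, Finset.prod_const, Finset.prod_const, one_pow, mul_one,
      Odd.neg_one_pow hodd, ← hΦ]
    ring
  have hpq : PauliMat p * PauliMat q = Φ • R := by rw [PauliMat_mul]
  have hqp : PauliMat q * PauliMat p = (-Φ) • R := by
    rw [PauliMat_mul, hswap, hR,
      show (fun k => mulIdx (q k) (p k)) = fun k => mulIdx (p k) (q k)
        from funext fun k => mulIdx_comm _ _]
  have key : ⁅Complex.I • PauliMat p, Complex.I • PauliMat q⁆ = (-2 * Φ) • R := by
    rw [Ring.lie_def, smul_mul_assoc, smul_mul_assoc, mul_smul_comm, mul_smul_comm,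
      hpq, hqp, smul_smul, smul_smul, smul_smul, smul_smul, ← sub_smul]
    congr 1
    linear_combination (2*Φ) * Complex.I_mul_I
  have hcase : Φ = Complex.I ∨ Φ = -Complex.I := by
    have h2 : (Φ - Complex.I) * (Φ + Complex.I) = 0 := by
      have h3 : (Φ - Complex.I) * (Φ + Complex.I) = Φ^2 - Complex.I^2 := by ring
      rw [h3, Complex.I_sq, hprodsq]; ring
    rcases mul_eq_zero.mp h2 with h | h
    · exact Or.inl (sub_eq_zero.mp h)
    · exact Or.inr (eq_neg_of_add_eq_zero_left h)
  rcases hcase with hI | hI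
  · refine ⟨-2, by norm_num, ?_⟩
    rw [key, hI, ← smul_assoc, Complex.real_smul]
    norm_num
  · refine ⟨2, by norm_num, ?_⟩
    rw [key, hI, ← smul_assoc, Complex.real_smul]
    norm_num

lemma trace_pauli_mul {n : ℕ} (p q : Fin n → Fin 4) :
    Matrix.trace (PauliMat p * PauliMat q) = if p = q then (2:ℂ)^n else 0 := by
  rw [PauliMat_mul, Matrix.trace_smul, PauliMat_trace]
  by_cases h : p = q
  · subst h
    rw [if_pos rfl]
    have h1 : ∀ k : Fin n, mulIdx (p k) (p k) = 0 := fun k => (mulIdx_eq_zero_iff _ _).mpr rfl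
    have h2 : ∀ k : Fin n, ph (p k) (p k) = 1 := fun k => by simp [ph]
    rw [Finset.prod_congr rfl fun k _ => h2 k,
      Finset.prod_congr rfl fun (k : Fin n) _ => (by rw [h1 k, if_pos rfl] : (if mulIdx (p k) (p k) = 0 then (2:ℂ) else 0) = 2)]
    simp [Finset.prod_const]
  · rw [if_neg h]
    obtain ⟨k0, hk0⟩ : ∃ k, p k ≠ q k := by
      by_contra hc; push_neg at hc; exact h (funext hc)
    have hz : (∏ i, if mulIdx (p i) (q i) = 0 then (2:ℂ) else 0) = 0 :=
      Finset.prod_eq_zero (Finset.mem_univ k0)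
        (by rw [if_neg (fun hz => hk0 ((mulIdx_eq_zero_iff _ _).mp hz))])
    rw [hz, smul_zero]

lemma pauliMat_li (n : ℕ) : LinearIndependent ℂ (PauliMat (n := n)) := by
  rw [Fintype.linearIndependent_iff]
  intro g hg p
  have h0 : Matrix.trace (PauliMat p * ∑ q, g q • PauliMat q) = 0 := by
    rw [hg, Matrix.mul_zero, Matrix.trace_zero]
  rw [Matrix.mul_sum] at h0
  simp_rw [Matrix.mul_smul, Matrix.trace_sum, Matrix.trace_smul, trace_pauli_mul] at h0
  have h1 : ∀ q : Fin n → Fin 4, g q • (if p = q then (2:ℂ)^n else 0)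
      = if p = q then g q * 2^n else 0 := fun q => by split_ifs <;> simp
  rw [Finset.sum_congr rfl fun q _ => h1 q, Finset.sum_ite_eq] at h0
  simp only [Finset.mem_univ, if_true] at h0
  exact (mul_eq_zero.mp h0).resolve_right (pow_ne_zero _ two_ne_zero)

lemma iPauli_li (n : ℕ) :
    LinearIndependent ℝ (fun p : Fin n → Fin 4 => Complex.I • PauliMat p) := by
  have hu : LinearIndependent ℂ (fun p : Fin n → Fin 4 => Complex.I • PauliMat p) := by
    have := (pauliMat_li n).units_smul
      (fun _ => (⟨Complex.I, -Complex.I, by simp, by simp⟩ : ℂˣ))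
    exact this
  exact hu.restrict_scalars (by
    intro a b hab
    simpa using hab)

def good {n : ℕ} (S : Set (Fin n → Fin 4)) (p : Fin n → Fin 4) : Prop :=
  ∃ c : ℝ, c ≠ 0 ∧ c • (Complex.I • PauliMat p) ∈ hamAlg S

lemma good_of_mem {n : ℕ} {S : Set (Fin n → Fin 4)} {p : Fin n → Fin 4} (hp : p ∈ S) :
    good S p :=
  ⟨1, one_ne_zero, by
    simpa [hamAlg] using LieSubalgebra.subset_lieSpan (R := ℝ) (Set.mem_image_of_mem _ hp)⟩

lemma good_bracket {n : ℕ} {S : Set (Fin n → Fin 4)} {p q : Fin n → Fin 4}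
    (hp : good S p) (hq : q ∈ S)
    (hodd : Odd (Finset.univ.filter fun k => p k ≠ q k ∧ p k ≠ 0 ∧ q k ≠ 0).card) :
    good S (fun k => mulIdx (p k) (q k)) := by
  obtain ⟨c, hc, hm⟩ := hp
  obtain ⟨c', hc', hb⟩ := lie_pauli p q hodd
  refine ⟨c * c', mul_ne_zero hc hc', ?_⟩
  have hq' : Complex.I • PauliMat q ∈ hamAlg S :=
    LieSubalgebra.subset_lieSpan (R := ℝ) (Set.mem_image_of_mem _ hq)
  have := (hamAlg S).lie_mem hm hq'
  rwa [smul_lie, hb, smul_smul] at this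

lemma card_le_finrank {n : ℕ} (S : Set (Fin n → Fin 4)) {ι : Type} [Fintype ι]
    (f : ι → (Fin n → Fin 4)) (hinj : Function.Injective f)
    (hgood : ∀ i, good S (f i)) :
    Fintype.card ι ≤ Module.finrank ℝ (hamAlg S) := by
  classical
  have hli : LinearIndependent ℝ (fun i => Complex.I • PauliMat (f i)) :=
    (iPauli_li n).comp f hinj
  have hm : ∀ i, Complex.I • PauliMat (f i) ∈ (hamAlg S).toSubmodule := by
    intro i
    obtain ⟨c, hc, hmem⟩ := hgood i
    have h2 := ((hamAlg S).toSubmodule).smul_mem c⁻¹ hmem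
    rwa [smul_smul, inv_mul_cancel₀ hc, one_smul] at h2
  have hspan : Submodule.span ℝ (Set.range fun i => Complex.I • PauliMat (f i))
      ≤ (hamAlg S).toSubmodule :=
    Submodule.span_le.mpr (by rintro x ⟨i, rfl⟩; exact hm i)
  have hfd : FiniteDimensional ℝ (Matrix (Fin n → Fin 2) (Fin n → Fin 2) ℂ) := by
    infer_instance
  calc Fintype.card ι
      = Module.finrank ℝ ↥(Submodule.span ℝ (Set.range fun i => Complex.I • PauliMat (f i))) :=
        (finrank_span_eq_card hli).symm
    _ ≤ Module.finrank ℝ ↥((hamAlg S).toSubmodule) := Submodule.finrank_mono hspan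
    _ = Module.finrank ℝ ↥(hamAlg S) := rfl

lemma ladder_val {n a b : ℕ} (ha : a < n) (hb : b < n) (hab : a < b) (A B : Fin 4)
    (k : Fin n) :
    ladderString (⟨a, ha⟩ : Fin n) ⟨b, hb⟩ A B k =
      if k.val = a then A else if k.val = b then B
      else if a < k.val ∧ k.val < b then 3 else 0 := by
  unfold ladderString
  rw [min_eq_left (le_of_lt (Fin.mk_lt_mk.mpr hab)), max_eq_right (le_of_lt (Fin.mk_lt_mk.mpr hab))]
  simp [Fin.ext_iff, Fin.lt_def]

lemma zz_val {n a b : ℕ} (ha : a < n) (hb : b < n) (k : Fin n) :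
    zzString (⟨a, ha⟩ : Fin n) ⟨b, hb⟩ k = if k.val = a ∨ k.val = b then 3 else 0 := by
  simp [zzString, Fin.ext_iff]

def famString (N : ℕ) (V : Finset ℕ) : Fin (2*N) → Fin 4 := fun k =>
  if k.val ∈ V then 3
  else if k.val = N then (if Even V.card then 1 else 2)
  else if k.val = N + 1 then 1 else 0

def aux1 (N : ℕ) (V : Finset ℕ) : Fin (2*N) → Fin 4 := fun k =>
  if k.val = 0 then 3
  else if k.val ∈ V then 3
  else if k.val = N then (if Even V.card then 2 else 1)
  else if k.val = N + 1 then 1 else 0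

def aux2 (N j : ℕ) (V : Finset ℕ) : Fin (2*N) → Fin 4 := fun k =>
  if k.val = 0 then 2
  else if k.val = j then 1
  else if k.val < j then (if k.val ∈ V then 0 else 3)
  else if k.val ∈ V then 3
  else if k.val = N then (if Even V.card then 2 else 1)
  else if k.val = N + 1 then 1 else 0

section steps
variable {N j : ℕ} (V : Finset ℕ) (hN : 1 ≤ N) (hV : V ⊆ Finset.Ico 1 N)
  (hj1 : 1 ≤ j) (hjN : j < N) (hjV : j ∉ V)
include hN hV hj1 hjN hjV
set_option linter.unusedSectionVars false

omit hV hj1 hjN hjV in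
lemma fam_empty (hN2 : 2 ≤ N) :
    famString N ∅ = ladderString (⟨N, by omega⟩ : Fin (2*N)) ⟨N + 1, by omega⟩ 1 1 := by
  funext k
  obtain ⟨m, hm⟩ := k
  rw [ladder_val (by omega) (by omega) (by omega)]
  simp only [famString, Finset.notMem_empty, if_false, Finset.card_empty, Even.zero, if_true]
  split_ifs <;> first | rfl | omega

lemma step1_filter :
    (Finset.univ.filter fun k : Fin (2*N) =>
        famString N V k ≠ zzString (⟨0, by omega⟩ : Fin (2*N)) ⟨N, by omega⟩ k ∧
        famString N V k ≠ 0 ∧ zzString (⟨0, by omega⟩ : Fin (2*N)) ⟨N, by omega⟩ k ≠ 0)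
      = {(⟨N, by omega⟩ : Fin (2*N))} := by
  ext ⟨m, hm⟩
  simp only [Finset.mem_filter, Finset.mem_univ, true_and, Finset.mem_singleton, Fin.ext_iff]
  rw [zz_val]
  simp only [famString]
  by_cases hmV : m ∈ V
  · have h1 := Finset.mem_Ico.mp (hV hmV)
    have hmj : m ≠ j := fun h => hjV (h ▸ hmV)
    simp only [hmV, if_true]
    split_ifs <;> first | (simp; omega) | simp | omega
  · simp only [hmV, if_false]
    split_ifs <;> first | (simp; omega) | simp | omega

lemma step1_eq :
    (fun k => mulIdx (famString N V k)
        (zzString (⟨0, by omega⟩ : Fin (2*N)) ⟨N, by omega⟩ k)) = aux1 N V := by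
  funext ⟨m, hm⟩
  rw [zz_val]
  simp only [famString, aux1]
  by_cases hmV : m ∈ V
  · have h1 := Finset.mem_Ico.mp (hV hmV)
    simp only [hmV, if_true]
    split_ifs <;> first | rfl | omega | decide
  · simp only [hmV, if_false]
    split_ifs <;> first | rfl | omega | decide

lemma step2_filter :
    (Finset.univ.filter fun k : Fin (2*N) =>
        aux1 N V k ≠ ladderString (⟨0, by omega⟩ : Fin (2*N)) ⟨j, by omega⟩ 1 1 k ∧
        aux1 N V k ≠ 0 ∧ ladderString (⟨0, by omega⟩ : Fin (2*N)) ⟨j, by omega⟩ 1 1 k ≠ 0)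
      = {(⟨0, by omega⟩ : Fin (2*N))} := by
  ext ⟨m, hm⟩
  simp only [Finset.mem_filter, Finset.mem_univ, true_and, Finset.mem_singleton, Fin.ext_iff]
  rw [ladder_val (by omega) (by omega) (by omega)]
  simp only [aux1]
  by_cases hmV : m ∈ V
  · have h1 := Finset.mem_Ico.mp (hV hmV)
    have hmj : m ≠ j := fun h => hjV (h ▸ hmV)
    simp only [hmV, if_true]
    split_ifs <;> first | (simp; omega) | simp | omega
  · simp only [hmV, if_false]
    split_ifs <;> first | (simp; omega) | simp | omega

lemma step2_eq :
    (fun k => mulIdx (aux1 N V k)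
        (ladderString (⟨0, by omega⟩ : Fin (2*N)) ⟨j, by omega⟩ 1 1 k)) = aux2 N j V := by
  funext ⟨m, hm⟩
  rw [ladder_val (by omega) (by omega) (by omega)]
  simp only [aux1, aux2]
  by_cases hmV : m ∈ V
  · have h1 := Finset.mem_Ico.mp (hV hmV)
    have hmj : m ≠ j := fun h => hjV (h ▸ hmV)
    simp only [hmV, if_true, or_true]
    split_ifs <;> first | rfl | omega | decide
  · simp only [hmV, if_false, or_false]
    split_ifs <;> first | rfl | omega | decide

lemma step3_filter :
    (Finset.univ.filter fun k : Fin (2*N) =>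
        aux2 N j V k ≠ ladderString (⟨0, by omega⟩ : Fin (2*N)) ⟨j, by omega⟩ 2 2 k ∧
        aux2 N j V k ≠ 0 ∧ ladderString (⟨0, by omega⟩ : Fin (2*N)) ⟨j, by omega⟩ 2 2 k ≠ 0)
      = {(⟨j, by omega⟩ : Fin (2*N))} := by
  ext ⟨m, hm⟩
  simp only [Finset.mem_filter, Finset.mem_univ, true_and, Finset.mem_singleton, Fin.ext_iff]
  rw [ladder_val (by omega) (by omega) (by omega)]
  simp only [aux2]
  by_cases hmV : m ∈ V
  · have h1 := Finset.mem_Ico.mp (hV hmV)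
    have hmj : m ≠ j := fun h => hjV (h ▸ hmV)
    simp only [hmV, if_true]
    split_ifs <;> first | (simp; omega) | simp | omega
  · simp only [hmV, if_false]
    split_ifs <;> first | (simp; omega) | simp | omega

lemma step3_eq :
    (fun k => mulIdx (aux2 N j V k)
        (ladderString (⟨0, by omega⟩ : Fin (2*N)) ⟨j, by omega⟩ 2 2 k))
      = famString N (insert j V) := by
  funext ⟨m, hm⟩
  rw [ladder_val (by omega) (by omega) (by omega)]
  simp only [aux2, famString, Finset.mem_insert, Finset.card_insert_of_notMem hjV,
    Nat.even_add_one]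
  by_cases hmV : m ∈ V
  · have h1 := Finset.mem_Ico.mp (hV hmV)
    have hmj : m ≠ j := fun h => hjV (h ▸ hmV)
    simp only [hmV, if_true, or_true]
    split_ifs <;> first | rfl | omega | decide
  · simp only [hmV, if_false, or_false]
    split_ifs <;> first | rfl | omega | decide

end steps


lemma good_fam {N : ℕ} (hN : 1 ≤ N) (hN2 : 2 ≤ N) (V : Finset ℕ)
    (hV : V ⊆ Finset.Ico 1 N) :
    good (S_AIM N hN) (famString N V) := by
  classical
  induction V using Finset.induction_on with
  | empty =>
    refine good_of_mem (Or.inl ?_)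
    exact ⟨1, le_refl 1, by omega, Or.inr (Or.inr (Or.inl (fam_empty (N := N) (j := 0) hN hN2)))⟩
  | @insert j V hjV ih =>
    have hj := Finset.mem_Ico.mp (hV (Finset.mem_insert_self j V))
    have hV' : V ⊆ Finset.Ico 1 N := fun x hx => hV (Finset.mem_insert_of_mem hx)
    have g0 := ih hV'
    have hE : zzString (⟨0, by omega⟩ : Fin (2*N)) ⟨N, by omega⟩ ∈ S_AIM N hN := Or.inr rfl
    have g1 := good_bracket g0 hE (by
      rw [step1_filter V hN hV' hj.1 hj.2 hjV, Finset.card_singleton]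
      exact odd_one)
    rw [step1_eq V hN hV' hj.1 hj.2 hjV] at g1
    have hA : ladderString (⟨0, by omega⟩ : Fin (2*N)) ⟨j, by omega⟩ 1 1 ∈ S_AIM N hN :=
      Or.inl ⟨j, hj.1, hj.2, Or.inl rfl⟩
    have g2 := good_bracket g1 hA (by
      rw [step2_filter V hN hV' hj.1 hj.2 hjV, Finset.card_singleton]
      exact odd_one)
    rw [step2_eq V hN hV' hj.1 hj.2 hjV] at g2
    have hB : ladderString (⟨0, by omega⟩ : Fin (2*N)) ⟨j, by omega⟩ 2 2 ∈ S_AIM N hN :=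
      Or.inl ⟨j, hj.1, hj.2, Or.inr (Or.inl rfl)⟩
    have g3 := good_bracket g2 hB (by
      rw [step3_filter V hN hV' hj.1 hj.2 hjV, Finset.card_singleton]
      exact odd_one)
    rw [step3_eq V hN hV' hj.1 hj.2 hjV] at g3
    exact g3

lemma fam_inj {N : ℕ} {V W : Finset ℕ} (hV : V ⊆ Finset.Ico 1 N)
    (hW : W ⊆ Finset.Ico 1 N) (h : famString N V = famString N W) : V = W := by
  have key : ∀ V W : Finset ℕ, V ⊆ Finset.Ico 1 N → W ⊆ Finset.Ico 1 N →
      famString N V = famString N W → ∀ m, m ∈ V → m ∈ W := by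
    intro V W hV hW h m hm
    have hb := Finset.mem_Ico.mp (hV hm)
    have hc := congrFun h (⟨m, by omega⟩ : Fin (2*N))
    by_contra hmW
    simp only [famString, hm, if_true, hmW, if_false] at hc
    rw [if_neg (by omega : ¬ m = N), if_neg (by omega : ¬ m = N + 1)] at hc
    exact absurd hc (by decide)
  exact Finset.Subset.antisymm (fun m hm => key V W hV hW h m hm)
    (fun m hm => key W V hW hV h.symm m hm)


/-- The Hamiltonian algebra of the Anderson impurity model has dimension at least

`2^(N−1)`. -/
theorem finrank_hamAlg_AIM_ge (N : ℕ) (hN : 1 ≤ N) :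
    2 ^ (N - 1) ≤ Module.finrank ℝ (hamAlg (S_AIM N hN)) := by
  classical
  rcases eq_or_lt_of_le hN with h1 | h2
  · -- N = 1
    have hcard := card_le_finrank (S_AIM N hN) (ι := PUnit)
      (fun _ => zzString (⟨0, by omega⟩ : Fin (2*N)) ⟨N, by omega⟩)
      (fun a b _ => Subsingleton.elim a b)
      (fun _ => good_of_mem (Or.inr rfl))
    rw [show N - 1 = 0 by omega, pow_zero]
    simpa using hcard
  · -- N ≥ 2
    have hN2 : 2 ≤ N := h2
    have hcard := card_le_finrank (S_AIM N hN)
      (ι := {V // V ∈ (Finset.Ico 1 N).powerset})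
      (fun V => famString N V.val)
      (fun V W h => Subtype.ext (fam_inj (Finset.mem_powerset.mp V.property)
        (Finset.mem_powerset.mp W.property) h))
      (fun V => good_fam hN hN2 V.val (Finset.mem_powerset.mp V.property))
    rwa [Fintype.card_coe, Finset.card_powerset, Nat.card_Ico] at hcard
end
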